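/- For all positive integers n_0 and n_1, the maximal number of linear regions of a function computed by a ReLU network of design (n_0, n_1, 1), i.e. with one hidden layer of width n_1, input dimension n_0 and output dimension 1, equals Σ_{i=0}^{min{n_0, n_1}} C(n_1, i), where C(a,b) is the binomial coefficient. -/

import Mathlib

open scoped BigOperators
open MeasureTheory

noncomputable section

/-- The ReLU activation function. -/
def relu (x : ℝ) : ℝ := max x 0

/-- `f : ℝ^n → ℝ^m` is an affine map. -/
def IsAffineMap {n m : ℕ} (f : (Fin n → ℝ) → Fin m → ℝ) : Prop :=
  ∃ (A : Matrix (Fin m) (Fin n) ℝ) (b : Fin m → ℝ),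
    ∀ x i, f x i = (∑ j, A i j * x j) + b i

/-- `f : ℝ^n → ℝ^m` is an affine map all of whose coefficients have absolute value ≤ c. -/
def IsAffineMapB (c : ℝ) {n m : ℕ} (f : (Fin n → ℝ) → Fin m → ℝ) : Prop :=
  ∃ (A : Matrix (Fin m) (Fin n) ℝ) (b : Fin m → ℝ),
    (∀ i j, |A i j| ≤ c) ∧ (∀ i, |b i| ≤ c) ∧ ∀ x i, f x i = (∑ j, A i j * x j) + b i

/-- `ComputesA ρ n hidden m f` : `f` is computed by a feedforward network with activation
function `ρ`, input dimension `n`, hidden layer widths `hidden` and output dimension `m`. -/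
inductive ComputesA (ρ : ℝ → ℝ) :
    ∀ (n : ℕ), List ℕ → ∀ (m : ℕ), ((Fin n → ℝ) → Fin m → ℝ) → Prop
  | nil {n m : ℕ} (f : (Fin n → ℝ) → Fin m → ℝ) (hf : IsAffineMap f) :
      ComputesA ρ n [] m f
  | cons {n w m : ℕ} {ws : List ℕ} (f₀ : (Fin n → ℝ) → Fin w → ℝ)
      (g : (Fin w → ℝ) → Fin m → ℝ) (hf : IsAffineMap f₀)
      (hg : ComputesA ρ w ws m g) :
      ComputesA ρ n (w :: ws) m (fun x => g (fun i => ρ (f₀ x i)))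

/-- Same as `ComputesA` but all coefficients of all affine maps are bounded by `c`. -/
inductive ComputesAB (ρ : ℝ → ℝ) (c : ℝ) :
    ∀ (n : ℕ), List ℕ → ∀ (m : ℕ), ((Fin n → ℝ) → Fin m → ℝ) → Prop
  | nil {n m : ℕ} (f : (Fin n → ℝ) → Fin m → ℝ) (hf : IsAffineMapB c f) :
      ComputesAB ρ c n [] m f
  | cons {n w m : ℕ} {ws : List ℕ} (f₀ : (Fin n → ℝ) → Fin w → ℝ)
      (g : (Fin w → ℝ) → Fin m → ℝ) (hf : IsAffineMapB c f₀)
      (hg : ComputesAB ρ c w ws m g) :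
      ComputesAB ρ c n (w :: ws) m (fun x => g (fun i => ρ (f₀ x i)))

/-- `f` is computed by a ReLU network of design `(n, hidden…, m)`. -/
def Computes (n : ℕ) (hidden : List ℕ) (m : ℕ) (f : (Fin n → ℝ) → Fin m → ℝ) : Prop :=
  ComputesA relu n hidden m f

/-- `R` is a linear region of `f` : an open connected set on which `f` is affine,
maximal in the sense that `f` is not affine on any strictly larger open set. -/
def IsLinearRegion {n m : ℕ} (f : (Fin n → ℝ) → Fin m → ℝ) (R : Set (Fin n → ℝ)) : Prop :=
  IsOpen R ∧ IsConnected R ∧ (∃ g, IsAffineMap g ∧ Set.EqOn f g R) ∧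
    ∀ R' : Set (Fin n → ℝ), IsOpen R' → R ⊂ R' →
      ¬ ∃ g, IsAffineMap g ∧ Set.EqOn f g R'

/-- The number of linear regions of `f`. -/
def numRegions {n m : ℕ} (f : (Fin n → ℝ) → Fin m → ℝ) : ℕ :=
  {R | IsLinearRegion f R}.ncard

/-- `R(n, hidden…, m)` : the maximal number of linear regions of a function computed by a
ReLU network of design `(n, hidden…, m)`. -/
def maxRegions (n : ℕ) (hidden : List ℕ) (m : ℕ) : ℕ :=
  sSup {k | ∃ f : (Fin n → ℝ) → Fin m → ℝ, Computes n hidden m f ∧ numRegions f = k}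

/-- `f` is piecewise affine: continuous, finitely many linear regions, whose closures cover. -/
def IsPiecewiseAffine {n m : ℕ} (f : (Fin n → ℝ) → Fin m → ℝ) : Prop :=
  Continuous f ∧ {R | IsLinearRegion f R}.Finite ∧
    (⋃ R ∈ {R | IsLinearRegion f R}, closure R) = Set.univ

namespace Stmt6

/-- The affine functional of row `i`. -/
def lf {n d : ℕ} (a : Fin n → Fin d → ℝ) (b : Fin n → ℝ) (i : Fin n) (x : Fin d → ℝ) : ℝ :=
  (∑ j, a i j * x j) + b i

variable {n d : ℕ}

lemma lf_of_row_eq_zero (a : Fin n → Fin d → ℝ) (b : Fin n → ℝ) {i : Fin n} (h : a i = 0)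
    (x : Fin d → ℝ) : lf a b i x = b i := by
  simp [lf, h]

lemma continuous_lf (a : Fin n → Fin d → ℝ) (b : Fin n → ℝ) (i : Fin n) :
    Continuous (lf a b i) := by
  unfold lf
  exact (continuous_finset_sum _ fun j _ => continuous_const.mul (continuous_apply j)).add
    continuous_const

lemma lf_comb (a : Fin n → Fin d → ℝ) (b : Fin n → ℝ) (i : Fin n) (p q : ℝ) (h : p + q = 1)
    (x y : Fin d → ℝ) :
    lf a b i (fun j => p * x j + q * y j) = p * lf a b i x + q * lf a b i y := by
  have hj : ∀ j, a i j * (p * x j + q * y j) = p * (a i j * x j) + q * (a i j * y j) := by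
    intro j; ring
  simp only [lf]
  rw [Finset.sum_congr rfl fun j _ => hj j, Finset.sum_add_distrib, ← Finset.mul_sum,
    ← Finset.mul_sum]
  linear_combination (-(b i)) * h

lemma lf_update (a : Fin n → Fin d → ℝ) (b : Fin n → ℝ) (i : Fin n) (x : Fin d → ℝ)
    (j : Fin d) (δ : ℝ) :
    lf a b i (Function.update x j (x j + δ)) = lf a b i x + a i j * δ := by
  have hk : ∀ k, a i k * (Function.update x j (x j + δ) k)
      = a i k * x k + (if k = j then a i k * δ else 0) := by
    intro k
    rcases eq_or_ne k j with rfl | hkj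
    · rw [Function.update_self, if_pos rfl]; ring
    · rw [Function.update_of_ne hkj, if_neg hkj]; ring
  simp only [lf]
  rw [Finset.sum_congr rfl fun k _ => hk k, Finset.sum_add_distrib,
    Finset.sum_ite_eq' Finset.univ j (fun k => a i k * δ), if_pos (Finset.mem_univ j)]
  ring

lemma comb_pos {p q u v : ℝ} (hp : 0 ≤ p) (hq : 0 ≤ q) (hpq : p + q = 1) (hu : 0 < u)
    (hv : 0 < v) : 0 < p * u + q * v := by
  nlinarith [mul_nonneg hp (sub_nonneg.2 (min_le_left u v)),
    mul_nonneg hq (sub_nonneg.2 (min_le_right u v)), lt_min hu hv]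

lemma comb_neg {p q u v : ℝ} (hp : 0 ≤ p) (hq : 0 ≤ q) (hpq : p + q = 1) (hu : u < 0)
    (hv : v < 0) : p * u + q * v < 0 := by
  nlinarith [comb_pos hp hq hpq (neg_pos.2 hu) (neg_pos.2 hv)]

/-- Two affine maps agreeing on a nonempty open set are equal. -/
lemma affine_eq_of_eqOn {m : ℕ} {g g' : (Fin d → ℝ) → Fin m → ℝ} (hg : IsAffineMap g)
    (hg' : IsAffineMap g') {U : Set (Fin d → ℝ)} (hU : IsOpen U) (hne : U.Nonempty)
    (he : Set.EqOn g g' U) : g = g' := by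
  obtain ⟨A, bb, hA⟩ := hg
  obtain ⟨A', bb', hA'⟩ := hg'
  obtain ⟨u, hu⟩ := hne
  obtain ⟨ε, hε, hball⟩ := Metric.isOpen_iff.1 hU u hu
  have hmem : ∀ j : Fin d, Function.update u j (u j + ε / 2) ∈ U := by
    intro j
    apply hball
    rw [Metric.mem_ball, dist_pi_lt_iff hε]
    intro k
    rcases eq_or_ne k j with rfl | hk
    · rw [Function.update_self, Real.dist_eq, add_sub_cancel_left, abs_of_pos (by linarith)]
      linarith
    · rw [Function.update_of_ne hk, dist_self]; exact hε
  have E : ∀ z ∈ U, ∀ i, lf A bb i z = lf A' bb' i z := by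
    intro z hz i
    show (∑ j, A i j * z j) + bb i = (∑ j, A' i j * z j) + bb' i
    rw [← hA z i, ← hA' z i]
    exact congrFun (he hz) i
  have hAA : ∀ i j, A i j = A' i j := by
    intro i j
    have h2 := E _ (hmem j) i
    rw [lf_update A bb i u j (ε / 2), lf_update A' bb' i u j (ε / 2), E u hu i] at h2
    have h3 := add_left_cancel h2
    exact mul_right_cancel₀ (by positivity) h3
  have hbb : ∀ i, bb i = bb' i := by
    intro i
    have h1 := E u hu i
    simp only [lf] at h1
    rw [Finset.sum_congr rfl fun j _ => by rw [hAA i j]] at h1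
    exact add_left_cancel h1
  funext z i
  rw [hA, hA']
  congr 1
  · exact Finset.sum_congr rfl fun j _ => by rw [hAA i j]
  · exact hbb i

lemma exists_lf_ne {v : Fin d → ℝ} {w : ℝ} (hv : v ≠ 0) {U : Set (Fin d → ℝ)}
    (hU : IsOpen U) (hne : U.Nonempty) : ∃ x ∈ U, (∑ j, v j * x j) + w ≠ 0 := by
  obtain ⟨u, hu⟩ := hne
  by_cases h0 : (∑ j, v j * u j) + w = 0
  · obtain ⟨j, hj⟩ := Function.ne_iff.1 hv
    obtain ⟨ε, hε, hball⟩ := Metric.isOpen_iff.1 hU u hu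
    refine ⟨Function.update u j (u j + ε / 2), hball ?_, ?_⟩
    · rw [Metric.mem_ball, dist_pi_lt_iff hε]
      intro k
      rcases eq_or_ne k j with rfl | hk
      · rw [Function.update_self, Real.dist_eq, add_sub_cancel_left, abs_of_pos (by linarith)]
        linarith
      · rw [Function.update_of_ne hk, dist_self]; exact hε
    · show lf (fun _ : Fin 1 => v) (fun _ : Fin 1 => w) 0
        (Function.update u j (u j + ε / 2)) ≠ 0
      rw [lf_update]
      have h0' : lf (fun _ : Fin 1 => v) (fun _ : Fin 1 => w) 0 u = 0 := h0
      rw [h0', zero_add]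
      exact mul_ne_zero hj (by positivity)
  · exact ⟨u, hu, h0⟩

/-- A nonempty open set contains a point avoiding finitely many (nontrivial) affine
hyperplanes. -/
lemma exists_avoid {ι : Type*} [DecidableEq ι] (I : Finset ι) (v : ι → Fin d → ℝ) (w : ι → ℝ)
    {U : Set (Fin d → ℝ)} (hU : IsOpen U) (hne : U.Nonempty) :
    ∃ x ∈ U, ∀ m ∈ I, v m ≠ 0 → (∑ j, v m j * x j) + w m ≠ 0 := by
  classical
  induction I using Finset.induction_on generalizing U with
  | empty =>
    obtain ⟨u, hu⟩ := hne
    exact ⟨u, hu, by simp⟩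
  | @insert m I hmI ih =>
    by_cases hv : v m = 0
    · obtain ⟨x, hxU, hx⟩ := ih hU hne
      refine ⟨x, hxU, ?_⟩
      intro m' hm' hvm'
      rcases Finset.mem_insert.1 hm' with rfl | hm'
      · exact absurd hv hvm'
      · exact hx m' hm' hvm'
    · obtain ⟨x0, hx0U, hx0⟩ := exists_lf_ne hv hU hne
      have hUopen : IsOpen (U ∩ {x | (∑ j, v m j * x j) + w m ≠ 0}) := by
        refine hU.inter ?_
        have hc : Continuous fun x : Fin d → ℝ => (∑ j, v m j * x j) + w m :=
          continuous_lf (fun _ : Fin 1 => v m) (fun _ : Fin 1 => w m) 0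
        exact isOpen_compl_singleton.preimage hc
      obtain ⟨x, hxU, hx⟩ := ih hUopen ⟨x0, hx0U, hx0⟩
      refine ⟨x, hxU.1, ?_⟩
      intro m' hm' hvm'
      rcases Finset.mem_insert.1 hm' with rfl | hm'
      · exact hxU.2
      · exact hx m' hm' hvm'

/-- Realizable (generalized) sign vectors. -/
def Good (a : Fin n → Fin d → ℝ) (b : Fin n → ℝ) (s : Fin n → Bool) : Prop :=
  (∃ x : Fin d → ℝ, ∀ i, a i ≠ 0 → if s i then 0 < lf a b i x else lf a b i x < 0) ∧
  ∀ i, a i = 0 → s i = decide (0 < b i)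

lemma pascal_sum (d n : ℕ) :
    ∑ i ∈ Finset.range (d+1), (n+1).choose i
      = (∑ i ∈ Finset.range (d+1), n.choose i) + ∑ i ∈ Finset.range d, n.choose i := by
  induction d with
  | zero => simp
  | succ d ih =>
    rw [Finset.sum_range_succ (f := fun i => (n+1).choose i) (n := d+1), ih,
      Nat.choose_succ_succ,
      Finset.sum_range_succ (f := fun i => n.choose i) (n := d+1),
      Finset.sum_range_succ (f := fun i => n.choose i) (n := d)]
    ring

lemma good_restrict {n d : ℕ} {a : Fin (n+1) → Fin d → ℝ} {b : Fin (n+1) → ℝ}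
    {s : Fin (n+1) → Bool} (h : Good a b s) :
    Good (fun i : Fin n => a i.castSucc) (fun i => b i.castSucc) (fun i => s i.castSucc) := by
  obtain ⟨⟨x, hx⟩, hcan⟩ := h
  exact ⟨⟨x, fun i hi => hx i.castSucc hi⟩, fun i hi => hcan i.castSucc hi⟩

/-- Bound on the number of realizable sign vectors. -/
theorem card_good_le :
    ∀ (n d : ℕ) (a : Fin n → Fin d → ℝ) (b : Fin n → ℝ),
      {s | Good a b s}.ncard ≤ ∑ i ∈ Finset.range (d+1), n.choose i := by
  intro n
  induction n with
  | zero =>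
    intro d a b
    have h1 : {s : Fin 0 → Bool | Good a b s}.ncard ≤ 1 := by
      have hsub : {s : Fin 0 → Bool | Good a b s} ⊆ {fun i => i.elim0} := by
        intro s _
        simp only [Set.mem_singleton_iff]
        funext i
        exact i.elim0
      calc {s : Fin 0 → Bool | Good a b s}.ncard
          ≤ ({fun i => i.elim0} : Set (Fin 0 → Bool)).ncard :=
            Set.ncard_le_ncard hsub (Set.toFinite _)
        _ = 1 := Set.ncard_singleton _
    have h2 : Nat.choose 0 0 ≤ ∑ i ∈ Finset.range (d+1), Nat.choose 0 i :=
      Finset.single_le_sum (f := fun i => Nat.choose 0 i) (fun i _ => Nat.zero_le _)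
        (Finset.mem_range.2 (Nat.succ_pos d))
    exact h1.trans h2
  | succ n ih =>
    intro d a b
    classical
    have hrestr : ∀ s : Fin (n+1) → Bool, Good a b s →
        Good (fun i : Fin n => a i.castSucc) (fun i => b i.castSucc)
          (fun i => s i.castSucc) := fun s hs => good_restrict hs
    have hAsplit : {s | Good a b s}
        = {s | Good a b s ∧ s (Fin.last n) = true} ∪ {s | Good a b s ∧ s (Fin.last n) = false} := by
      ext s
      simp only [Set.mem_setOf_eq, Set.mem_union]
      constructor
      · intro h
        rcases Bool.eq_false_or_eq_true (s (Fin.last n)) with hlast | hlast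
        · exact Or.inl ⟨h, hlast⟩
        · exact Or.inr ⟨h, hlast⟩
      · rintro (⟨h, _⟩ | ⟨h, _⟩) <;> exact h
    have hdisj : Disjoint {s | Good a b s ∧ s (Fin.last n) = true}
        {s | Good a b s ∧ s (Fin.last n) = false} := by
      rw [Set.disjoint_left]
      rintro s ⟨_, h1⟩ ⟨_, h2⟩
      rw [h1] at h2
      exact Bool.noConfusion h2
    have hcard1 : {s | Good a b s}.ncard
        = {s | Good a b s ∧ s (Fin.last n) = true}.ncard
          + {s | Good a b s ∧ s (Fin.last n) = false}.ncard := by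
      rw [hAsplit]
      exact Set.ncard_union_eq hdisj (Set.toFinite _) (Set.toFinite _)
    have hinjp : ∀ (v : Bool), Set.InjOn (fun (s : Fin (n+1) → Bool) (i : Fin n) => s i.castSucc)
        {s | Good a b s ∧ s (Fin.last n) = v} := by
      intro v s1 h1 s2 h2 heq
      funext i
      induction i using Fin.lastCases with
      | last => rw [h1.2, h2.2]
      | cast k => exact congrFun heq k
    have himp : ∀ (v : Bool),
        (fun (s : Fin (n+1) → Bool) (i : Fin n) => s i.castSucc) ''
          {s | Good a b s ∧ s (Fin.last n) = v}
        ⊆ {s' | Good (fun i : Fin n => a i.castSucc) (fun i => b i.castSucc) s'} := by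
      rintro v _ ⟨s, hs, rfl⟩
      exact hrestr s hs.1
    have hC : ((fun (s : Fin (n+1) → Bool) (i : Fin n) => s i.castSucc) ''
            {s | Good a b s ∧ s (Fin.last n) = true}
          ∩ (fun (s : Fin (n+1) → Bool) (i : Fin n) => s i.castSucc) ''
            {s | Good a b s ∧ s (Fin.last n) = false}).ncard
        ≤ ∑ i ∈ Finset.range d, n.choose i := by
      by_cases hz : a (Fin.last n) = 0
      · have hemp : ((fun (s : Fin (n+1) → Bool) (i : Fin n) => s i.castSucc) ''
            {s | Good a b s ∧ s (Fin.last n) = true}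
          ∩ (fun (s : Fin (n+1) → Bool) (i : Fin n) => s i.castSucc) ''
            {s | Good a b s ∧ s (Fin.last n) = false}) = ∅ := by
          ext s'
          simp only [Set.mem_inter_iff, Set.mem_image, Set.mem_setOf_eq,
            Set.mem_empty_iff_false, iff_false, not_and]
          rintro ⟨s1, ⟨hg1, hv1⟩, rfl⟩ ⟨s2, ⟨hg2, hv2⟩, heq⟩
          have e1 : s1 (Fin.last n) = decide (0 < b (Fin.last n)) := hg1.2 _ hz
          have e2 : s2 (Fin.last n) = decide (0 < b (Fin.last n)) := hg2.2 _ hz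
          rw [hv1] at e1
          rw [hv2] at e2
          rw [← e2] at e1
          exact Bool.noConfusion e1
        rw [hemp]
        simp
      · obtain ⟨j, hj⟩ := Function.ne_iff.1 hz
        cases d with
        | zero => exact j.elim0
        | succ e =>
          set ci : Fin n → ℝ := fun i => a i.castSucc j / a (Fin.last n) j with hci
          set a2 : Fin n → Fin e → ℝ := fun i k =>
            a i.castSucc (j.succAbove k) - ci i * a (Fin.last n) (j.succAbove k) with ha2
          set b2 : Fin n → ℝ := fun i => b i.castSucc - ci i * b (Fin.last n) with hb2
          have hkey : ∀ (i : Fin n) (z : Fin (e+1) → ℝ), lf a b (Fin.last n) z = 0 →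
              lf a2 b2 i (fun k => z (j.succAbove k)) = lf a b i.castSucc z := by
            intro i z hz0
            simp only [lf] at hz0 ⊢
            have e1 : ∑ q, a i.castSucc q * z q
                = a i.castSucc j * z j
                  + ∑ k, a i.castSucc (j.succAbove k) * z (j.succAbove k) :=
              Fin.sum_univ_succAbove (fun q => a i.castSucc q * z q) j
            have e2 : ∑ q, a (Fin.last n) q * z q
                = a (Fin.last n) j * z j
                  + ∑ k, a (Fin.last n) (j.succAbove k) * z (j.succAbove k) :=
              Fin.sum_univ_succAbove (fun q => a (Fin.last n) q * z q) j
            have e4 : ci i * a (Fin.last n) j = a i.castSucc j := by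
              rw [hci]
              exact div_mul_cancel₀ _ hj
            have e5 : ∑ k, a2 i k * z (j.succAbove k)
                = (∑ k, a i.castSucc (j.succAbove k) * z (j.succAbove k))
                  - ci i * ∑ k, a (Fin.last n) (j.succAbove k) * z (j.succAbove k) := by
              rw [Finset.mul_sum, ← Finset.sum_sub_distrib]
              refine Finset.sum_congr rfl fun k _ => ?_
              rw [ha2]
              ring
            rw [e5, hb2]
            linear_combination (-1 : ℝ) * e1 + ci i * e2 - ci i * hz0 + z j * e4
          have hsub : ((fun (s : Fin (n+1) → Bool) (i : Fin n) => s i.castSucc) ''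
                {s | Good a b s ∧ s (Fin.last n) = true}
              ∩ (fun (s : Fin (n+1) → Bool) (i : Fin n) => s i.castSucc) ''
                {s | Good a b s ∧ s (Fin.last n) = false})
              ⊆ {s' | Good a2 b2 s'} := by
            rintro s' ⟨⟨s1, ⟨hg1, hv1⟩, rfl⟩, ⟨s2, ⟨hg2, hv2⟩, heq2⟩⟩
            obtain ⟨⟨x, hx⟩, hcan1⟩ := hg1
            obtain ⟨⟨y, hy⟩, hcan2⟩ := hg2
            have hlx : 0 < lf a b (Fin.last n) x := by
              have h := hx (Fin.last n) hz
              rw [hv1] at h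
              simpa using h
            have hly : lf a b (Fin.last n) y < 0 := by
              have h := hy (Fin.last n) hz
              rw [hv2] at h
              simpa using h
            have hden : 0 < lf a b (Fin.last n) x - lf a b (Fin.last n) y := by linarith
            set t : ℝ := lf a b (Fin.last n) x / (lf a b (Fin.last n) x - lf a b (Fin.last n) y)
              with ht
            have ht0 : 0 ≤ t := div_nonneg hlx.le hden.le
            have ht1 : t ≤ 1 := (div_le_one hden).2 (by linarith)
            have hpq : (1 - t) + t = 1 := by ring
            set z : Fin (e+1) → ℝ := fun q => (1 - t) * x q + t * y q with hzdef
            have hz0 : lf a b (Fin.last n) z = 0 := by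
              rw [hzdef, lf_comb a b (Fin.last n) (1-t) t hpq x y, ht]
              field_simp
              ring
            have hzs : ∀ k : Fin n, a k.castSucc ≠ 0 →
                if s1 k.castSucc then 0 < lf a b k.castSucc z
                else lf a b k.castSucc z < 0 := by
              intro k hk
              have h1 := hx k.castSucc hk
              have h2 := hy k.castSucc hk
              have heqk : s2 k.castSucc = s1 k.castSucc := congrFun heq2 k
              rw [heqk] at h2
              have hco : lf a b k.castSucc z
                  = (1 - t) * lf a b k.castSucc x + t * lf a b k.castSucc y := by
                rw [hzdef, lf_comb a b k.castSucc (1-t) t hpq x y]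
              cases hs : s1 k.castSucc
              · rw [hs] at h1 h2
                simp only [if_neg (by simp : ¬ (false = true))] at h1 h2 ⊢
                rw [hco]
                exact comb_neg (by linarith) ht0 hpq h1 h2
              · rw [hs] at h1 h2
                simp only [if_pos rfl] at h1 h2 ⊢
                rw [hco]
                exact comb_pos (by linarith) ht0 hpq h1 h2
            refine ⟨⟨fun k => z (j.succAbove k), fun i hi2 => ?_⟩, fun i hi2 => ?_⟩
            · have hic : a i.castSucc ≠ 0 := by
                intro h0
                apply hi2
                funext k
                have hci0 : ci i = 0 := by
                  rw [hci]
                  simp [congrFun h0 j]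
                rw [ha2]
                simp [congrFun h0 (j.succAbove k), hci0]
              have hk := hzs i hic
              rw [hkey i z hz0]
              exact hk
            · have hbv : b2 i = lf a b i.castSucc z := by
                rw [← hkey i z hz0]
                exact (lf_of_row_eq_zero a2 b2 hi2 _).symm
              by_cases hic : a i.castSucc = 0
              · have hci0 : ci i = 0 := by
                  rw [hci]
                  simp [congrFun hic j]
                have hb2i : b2 i = b i.castSucc := by
                  rw [hb2]
                  simp [hci0]
                show s1 i.castSucc = decide (0 < b2 i)
                rw [hb2i]
                exact hcan1 i.castSucc hic
              · have hk := hzs i hic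
                show s1 i.castSucc = decide (0 < b2 i)
                cases hs : s1 i.castSucc
                · rw [hs] at hk
                  simp only [if_neg (by simp : ¬ (false = true))] at hk
                  rw [hbv]
                  exact (decide_eq_false (not_lt.2 hk.le)).symm
                · rw [hs] at hk
                  simp only [if_pos rfl] at hk
                  rw [hbv]
                  exact (decide_eq_true hk).symm
          calc _ ≤ ({s' | Good a2 b2 s'}).ncard := Set.ncard_le_ncard hsub (Set.toFinite _)
            _ ≤ _ := ih e a2 b2
    calc {s | Good a b s}.ncard
        = {s | Good a b s ∧ s (Fin.last n) = true}.ncard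
          + {s | Good a b s ∧ s (Fin.last n) = false}.ncard := hcard1
      _ = ((fun (s : Fin (n+1) → Bool) (i : Fin n) => s i.castSucc) ''
            {s | Good a b s ∧ s (Fin.last n) = true}).ncard
          + ((fun (s : Fin (n+1) → Bool) (i : Fin n) => s i.castSucc) ''
            {s | Good a b s ∧ s (Fin.last n) = false}).ncard := by
          rw [Set.ncard_image_of_injOn (hinjp true), Set.ncard_image_of_injOn (hinjp false)]
      _ = ((fun (s : Fin (n+1) → Bool) (i : Fin n) => s i.castSucc) ''
            {s | Good a b s ∧ s (Fin.last n) = true}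
          ∪ (fun (s : Fin (n+1) → Bool) (i : Fin n) => s i.castSucc) ''
            {s | Good a b s ∧ s (Fin.last n) = false}).ncard
          + ((fun (s : Fin (n+1) → Bool) (i : Fin n) => s i.castSucc) ''
            {s | Good a b s ∧ s (Fin.last n) = true}
          ∩ (fun (s : Fin (n+1) → Bool) (i : Fin n) => s i.castSucc) ''
            {s | Good a b s ∧ s (Fin.last n) = false}).ncard :=
          (Set.ncard_union_add_ncard_inter _ _ (Set.toFinite _) (Set.toFinite _)).symm
      _ ≤ (∑ i ∈ Finset.range (d+1), n.choose i) + ∑ i ∈ Finset.range d, n.choose i := by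
          refine add_le_add ?_ hC
          calc _ ≤ ({s' | Good (fun i : Fin n => a i.castSucc) (fun i => b i.castSucc) s'}).ncard :=
                Set.ncard_le_ncard (Set.union_subset (himp true) (himp false)) (Set.toFinite _)
            _ ≤ _ := ih d _ _
      _ = ∑ i ∈ Finset.range (d+1), (n+1).choose i := (pascal_sum d n).symm

def cell (a : Fin n → Fin d → ℝ) (b : Fin n → ℝ) (s : Fin n → Bool) : Set (Fin d → ℝ) :=
  {x | ∀ i, a i ≠ 0 → if s i then 0 < lf a b i x else lf a b i x < 0}

lemma cell_open (a : Fin n → Fin d → ℝ) (b : Fin n → ℝ) (s : Fin n → Bool) :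
    IsOpen (cell a b s) := by
  have hc : cell a b s
      = ⋂ i, {x | a i ≠ 0 → if s i then 0 < lf a b i x else lf a b i x < 0} := by
    ext x; simp [cell, Set.mem_iInter]
  rw [hc]
  refine isOpen_iInter_of_finite fun i => ?_
  by_cases h : a i = 0
  · convert isOpen_univ using 1
    ext x; simp [h]
  · have he : {x | a i ≠ 0 → if s i then 0 < lf a b i x else lf a b i x < 0}
        = {x | if s i then 0 < lf a b i x else lf a b i x < 0} := by
      ext x; simp [h]
    rw [he]
    cases hs : s i
    · simp only [hs, if_neg (by simp : ¬ (false = true))]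
      exact isOpen_lt (continuous_lf a b i) continuous_const
    · simp only [hs, if_pos rfl]
      exact isOpen_lt continuous_const (continuous_lf a b i)

lemma cell_convex (a : Fin n → Fin d → ℝ) (b : Fin n → ℝ) (s : Fin n → Bool) :
    Convex ℝ (cell a b s) := by
  intro x hx y hy p q hp hq hpq
  simp only [cell, Set.mem_setOf_eq] at hx hy ⊢
  intro i hi
  have hx' := hx i hi
  have hy' := hy i hi
  have hco : lf a b i (p • x + q • y) = p * lf a b i x + q * lf a b i y := by
    have hfun : (p • x + q • y) = fun j => p * x j + q * y j := by
      funext j; simp [smul_eq_mul]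
    rw [hfun, lf_comb a b i p q hpq x y]
  cases hs : s i
  · rw [hs] at hx' hy'
    simp only [if_neg (by simp : ¬ (false = true))] at hx' hy' ⊢
    rw [hco]
    exact comb_neg hp hq hpq hx' hy'
  · rw [hs] at hx' hy'
    simp only [if_pos rfl] at hx' hy' ⊢
    rw [hco]
    exact comb_pos hp hq hpq hx' hy'

def piece (a : Fin n → Fin d → ℝ) (b : Fin n → ℝ) (c : Fin n → ℝ) (e : ℝ) (s : Fin n → Bool) :
    (Fin d → ℝ) → Fin 1 → ℝ := fun x _ =>
  (∑ i, if a i ≠ 0 ∧ s i = true then c i * lf a b i x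
        else if a i = 0 then c i * max (b i) 0 else 0) + e

lemma piece_affine (a : Fin n → Fin d → ℝ) (b c : Fin n → ℝ) (e : ℝ) (s : Fin n → Bool) :
    IsAffineMap (piece a b c e s) := by
  classical
  refine ⟨fun _ j => ∑ i, if a i ≠ 0 ∧ s i = true then c i * a i j else 0,
          fun _ => (∑ i, if a i ≠ 0 ∧ s i = true then c i * b i
                         else if a i = 0 then c i * max (b i) 0 else 0) + e, ?_⟩
  intro x k
  simp only [piece]
  have e1 : (∑ i, if a i ≠ 0 ∧ s i = true then c i * lf a b i x
        else if a i = 0 then c i * max (b i) 0 else 0)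
      = (∑ i, ∑ j, (if a i ≠ 0 ∧ s i = true then c i * a i j else 0) * x j)
        + ∑ i, (if a i ≠ 0 ∧ s i = true then c i * b i
                else if a i = 0 then c i * max (b i) 0 else 0) := by
    rw [← Finset.sum_add_distrib]
    refine Finset.sum_congr rfl fun i _ => ?_
    by_cases hP : a i ≠ 0 ∧ s i = true
    · simp only [if_pos hP, lf, mul_add, Finset.mul_sum, mul_assoc, ite_mul, zero_mul]
    · simp [if_neg hP]
  rw [e1, add_assoc]
  congr 1
  rw [Finset.sum_comm]
  exact Finset.sum_congr rfl fun j _ => (Finset.sum_mul _ _ _).symm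

lemma eqOn_piece (a : Fin n → Fin d → ℝ) (b c : Fin n → ℝ) (e : ℝ) (s : Fin n → Bool)
    {f : (Fin d → ℝ) → Fin 1 → ℝ}
    (hf : f = fun x _ => (∑ i, c i * relu (lf a b i x)) + e) :
    Set.EqOn f (piece a b c e s) (cell a b s) := by
  intro x hx
  simp only [cell, Set.mem_setOf_eq] at hx
  subst hf
  funext k
  simp only [piece]
  congr 1
  refine Finset.sum_congr rfl fun i _ => ?_
  by_cases h0 : a i = 0
  · have hlf : lf a b i x = b i := lf_of_row_eq_zero a b h0 x
    simp [h0, relu, hlf]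
  · have hx' := hx i h0
    cases hs : s i
    · rw [hs] at hx'
      simp only [if_neg (by simp : ¬ (false = true))] at hx'
      simp [h0, hs, relu, max_eq_right hx'.le]
    · rw [hs] at hx'
      simp only [if_pos rfl] at hx'
      simp [h0, hs, relu, max_eq_left hx'.le]

lemma region_absorb {f : (Fin d → ℝ) → Fin 1 → ℝ} {R O : Set (Fin d → ℝ)}
    (hR : IsLinearRegion f R) (hO : IsOpen O) {gO : (Fin d → ℝ) → Fin 1 → ℝ}
    (hgO : IsAffineMap gO) (he : Set.EqOn f gO O) (hne : (R ∩ O).Nonempty) : O ⊆ R := by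
  obtain ⟨hRopen, hRconn, ⟨gR, hgR, heR⟩, hmax⟩ := hR
  have hgg : gR = gO := by
    refine affine_eq_of_eqOn hgR hgO (hRopen.inter hO) hne fun x hx => ?_
    rw [← heR hx.1, he hx.2]
  by_contra hsub
  have hss : R ⊂ R ∪ O := Set.ssubset_iff_subset_ne.2 ⟨Set.subset_union_left,
    fun h => hsub (by rw [h]; exact Set.subset_union_right)⟩
  refine hmax (R ∪ O) (hRopen.union hO) hss ⟨gR, hgR, fun x hx => ?_⟩
  rcases hx with hx | hx
  · exact heR hx
  · rw [he hx, hgg]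

lemma region_eq {f : (Fin d → ℝ) → Fin 1 → ℝ} {R₁ R₂ : Set (Fin d → ℝ)}
    (h₁ : IsLinearRegion f R₁) (h₂ : IsLinearRegion f R₂) (hne : (R₁ ∩ R₂).Nonempty) :
    R₁ = R₂ := by
  obtain ⟨g1, hg1, he1⟩ := h₁.2.2.1
  obtain ⟨g2, hg2, he2⟩ := h₂.2.2.1
  have hgg : g1 = g2 := affine_eq_of_eqOn hg1 hg2 (h₁.1.inter h₂.1) hne
    fun x hx => by rw [← he1 hx.1, he2 hx.2]
  have hsub : ∀ {S T : Set (Fin d → ℝ)} {gS gT : (Fin d → ℝ) → Fin 1 → ℝ},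
      IsLinearRegion f S → IsLinearRegion f T → IsAffineMap gS → Set.EqOn f gS S →
      Set.EqOn f gT T → gS = gT → T ⊆ S := by
    intro S T gS gT hS hT hgS heS heT hgeq
    by_contra hsub'
    have hss : S ⊂ S ∪ T := Set.ssubset_iff_subset_ne.2 ⟨Set.subset_union_left,
      fun h => hsub' (by rw [h]; exact Set.subset_union_right)⟩
    refine hS.2.2.2 (S ∪ T) (hS.1.union hT.1) hss ⟨gS, hgS, fun x hx => ?_⟩
    rcases hx with hx | hx
    · exact heS hx
    · rw [heT hx, hgeq]
  exact Set.Subset.antisymm (hsub h₂ h₁ hg2 he2 he1 hgg.symm) (hsub h₁ h₂ hg1 he1 he2 hgg)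

theorem regions_injOn (a : Fin n → Fin d → ℝ) (b c : Fin n → ℝ) (e : ℝ)
    {f : (Fin d → ℝ) → Fin 1 → ℝ}
    (hf : f = fun x _ => (∑ i, c i * relu (lf a b i x)) + e) :
    ∃ φ : Set (Fin d → ℝ) → (Fin n → Bool),
      Set.MapsTo φ {R | IsLinearRegion f R} {s | Good a b s} ∧
      Set.InjOn φ {R | IsLinearRegion f R} := by
  classical
  have key : ∀ R, IsLinearRegion f R → ∃ s, Good a b s ∧ (R ∩ cell a b s).Nonempty := by
    intro R hR
    obtain ⟨x, hxR, hx⟩ := exists_avoid Finset.univ a b hR.1 hR.2.1.nonempty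
    have hmem : x ∈ cell a b (fun i => decide (0 < lf a b i x)) := by
      intro i hi
      have hne0 : lf a b i x ≠ 0 := hx i (Finset.mem_univ i) hi
      by_cases hpos : 0 < lf a b i x
      · simp [hpos]
      · have hneg : lf a b i x < 0 := lt_of_le_of_ne (not_lt.1 hpos) hne0
        simp [hpos, hneg]
    refine ⟨fun i => decide (0 < lf a b i x), ⟨⟨x, hmem⟩, ?_⟩, ⟨x, hxR, hmem⟩⟩
    intro i hi
    simp [lf_of_row_eq_zero a b hi x]
  refine ⟨fun R => if h : ∃ s, Good a b s ∧ (R ∩ cell a b s).Nonempty then h.choose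
    else fun _ => true, ?_, ?_⟩
  · intro R hR
    have h := key R hR
    simp only [Set.mem_setOf_eq]
    rw [dif_pos h]
    exact h.choose_spec.1
  · intro R₁ hR₁ R₂ hR₂ hφ
    simp only [Set.mem_setOf_eq] at hR₁ hR₂
    have h1 := key R₁ hR₁
    have h2 := key R₂ hR₂
    dsimp only at hφ
    rw [dif_pos h1, dif_pos h2] at hφ
    have hc1 : (R₁ ∩ cell a b h1.choose).Nonempty := h1.choose_spec.2
    have hc2 : (R₂ ∩ cell a b h1.choose).Nonempty := by
      rw [hφ]; exact h2.choose_spec.2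
    have sub1 : cell a b h1.choose ⊆ R₁ := region_absorb hR₁ (cell_open a b _)
      (piece_affine a b c e _) (eqOn_piece a b c e _ hf) hc1
    have sub2 : cell a b h1.choose ⊆ R₂ := region_absorb hR₂ (cell_open a b _)
      (piece_affine a b c e _) (eqOn_piece a b c e _ hf) hc2
    obtain ⟨y, hy1, hyc⟩ := hc1
    exact region_eq hR₁ hR₂ ⟨y, hy1, sub2 hyc⟩

theorem regions_finite (a : Fin n → Fin d → ℝ) (b c : Fin n → ℝ) (e : ℝ)
    {f : (Fin d → ℝ) → Fin 1 → ℝ}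
    (hf : f = fun x _ => (∑ i, c i * relu (lf a b i x)) + e) :
    {R | IsLinearRegion f R}.Finite := by
  obtain ⟨φ, hmaps, hinj⟩ := regions_injOn a b c e hf
  exact Set.Finite.of_finite_image
    (Set.Finite.subset (Set.toFinite {s | Good a b s}) hmaps.image_subset) hinj

theorem numRegions_le (a : Fin n → Fin d → ℝ) (b c : Fin n → ℝ) (e : ℝ)
    {f : (Fin d → ℝ) → Fin 1 → ℝ}
    (hf : f = fun x _ => (∑ i, c i * relu (lf a b i x)) + e) :
    numRegions f ≤ ∑ i ∈ Finset.range (d+1), n.choose i := by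
  obtain ⟨φ, hmaps, hinj⟩ := regions_injOn a b c e hf
  calc numRegions f ≤ {s | Good a b s}.ncard :=
        Set.ncard_le_ncard_of_injOn φ hmaps hinj (Set.toFinite _)
    _ ≤ _ := card_good_le n d a b

/-! ### Lower bound construction -/

lemma lf_neg (a : Fin n → Fin d → ℝ) (b : Fin n → ℝ) (i : Fin n) (x : Fin d → ℝ) :
    lf (fun i' j => -(a i' j)) (fun i' => -(b i')) i x = -(lf a b i x) := by
  simp only [lf, neg_add, ← Finset.sum_neg_distrib, neg_mul]

lemma exists_near_neg {a : Fin n → Fin d → ℝ} {b : Fin n → ℝ} {i : Fin n} (ha : a i ≠ 0)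
    {p : Fin d → ℝ} {ε : ℝ} (hε : 0 < ε) (hp : lf a b i p ≤ 0) :
    ∃ x, dist x p < ε ∧ lf a b i x < 0 := by
  rcases lt_or_eq_of_le hp with h | h
  · exact ⟨p, by simp [hε], h⟩
  · obtain ⟨j, hj⟩ := Function.ne_iff.1 ha
    refine ⟨Function.update p j (p j + (-(ε/2) * |a i j| / a i j)), ?_, ?_⟩
    · rw [dist_pi_lt_iff hε]
      intro k
      rcases eq_or_ne k j with rfl | hk
      · rw [Function.update_self, Real.dist_eq, add_sub_cancel_left, abs_div, abs_mul, abs_neg,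
          abs_abs, abs_of_pos (by linarith : (0:ℝ) < ε/2), mul_div_assoc,
          div_self (abs_ne_zero.2 hj), mul_one]
        linarith
      · rw [Function.update_of_ne hk, dist_self]; exact hε
    · rw [lf_update, h, zero_add, mul_comm, div_mul_cancel₀ _ hj]
      have habs : 0 < |a i j| := abs_pos.2 hj
      nlinarith

lemma exists_near_pos {a : Fin n → Fin d → ℝ} {b : Fin n → ℝ} {i : Fin n} (ha : a i ≠ 0)
    {p : Fin d → ℝ} {ε : ℝ} (hε : 0 < ε) (hp : 0 ≤ lf a b i p) :
    ∃ x, dist x p < ε ∧ 0 < lf a b i x := by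
  have ha' : (fun j => -(a i j)) ≠ 0 := by
    obtain ⟨j, hj⟩ := Function.ne_iff.1 ha
    exact Function.ne_iff.2 ⟨j, by simpa using hj⟩
  have hp' : lf (fun i' j => -(a i' j)) (fun i' => -(b i')) i p ≤ 0 := by
    rw [lf_neg]; linarith
  obtain ⟨x, hx1, hx2⟩ := exists_near_neg (a := fun i' j => -(a i' j)) (b := fun i' => -(b i'))
    (i := i) ha' hε hp'
  rw [lf_neg] at hx2
  exact ⟨x, hx1, by linarith⟩

lemma cell_ne {a : Fin n → Fin d → ℝ} {b : Fin n → ℝ} (hrows : ∀ i, a i ≠ 0)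
    {s s' : Fin n → Bool} (h : s ≠ s') (hne : (cell a b s).Nonempty) :
    cell a b s ≠ cell a b s' := by
  obtain ⟨i, hi⟩ := Function.ne_iff.1 h
  intro heq
  obtain ⟨x, hx⟩ := hne
  have hx' : x ∈ cell a b s' := heq ▸ hx
  have h1 := hx i (hrows i)
  have h2 := hx' i (hrows i)
  cases hb : s i <;> cases hb' : s' i <;> rw [hb] at h1 hi <;> rw [hb'] at h2 hi
  · exact hi rfl
  · rw [if_neg (by simp : ¬ (false = true))] at h1
    rw [if_pos rfl] at h2
    linarith
  · rw [if_pos rfl] at h1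
    rw [if_neg (by simp : ¬ (false = true))] at h2
    linarith
  · exact hi rfl

/-- Every nonempty cell of an arrangement with nonzero rows and pairwise distinct pieces is a
linear region. -/
theorem cell_isRegion {a : Fin n → Fin d → ℝ} {b c : Fin n → ℝ} {e : ℝ}
    (hrows : ∀ i, a i ≠ 0)
    (hdist : ∀ s s' : Fin n → Bool, s ≠ s' → piece a b c e s ≠ piece a b c e s')
    {f : (Fin d → ℝ) → Fin 1 → ℝ}
    (hf : f = fun x _ => (∑ i, c i * relu (lf a b i x)) + e)
    {s : Fin n → Bool} (hne : (cell a b s).Nonempty) : IsLinearRegion f (cell a b s) := by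
  classical
  refine ⟨cell_open a b s, ⟨hne, (cell_convex a b s).isPreconnected⟩,
    ⟨piece a b c e s, piece_affine a b c e s, eqOn_piece a b c e s hf⟩, ?_⟩
  rintro R' hR' hss ⟨g, hg, hgf⟩
  have hgs : g = piece a b c e s := by
    refine affine_eq_of_eqOn hg (piece_affine a b c e s) (cell_open a b s) hne fun x hx => ?_
    rw [← hgf (hss.1 hx)]
    exact eqOn_piece a b c e s hf hx
  have claimA : ∀ q ∈ R', (∀ i, lf a b i q ≠ 0) → q ∈ cell a b s := by
    intro q hq hq0
    have hqmem : q ∈ cell a b (fun i => decide (0 < lf a b i q)) := by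
      intro i _
      by_cases hpos : 0 < lf a b i q
      · simp [hpos]
      · have hneg := lt_of_le_of_ne (not_lt.1 hpos) (hq0 i)
        simp [hpos, hneg]
    have hseq : (fun i => decide (0 < lf a b i q)) = s := by
      by_contra hne'
      apply hdist _ _ hne'
      refine affine_eq_of_eqOn (piece_affine a b c e _) (piece_affine a b c e s)
        ((cell_open a b _).inter hR') ⟨q, hqmem, hq⟩ fun x hx => ?_
      rw [← eqOn_piece a b c e _ hf hx.1, hgf hx.2, hgs]
    rw [← hseq]
    exact hqmem
  obtain ⟨p, hpR', hpc⟩ := Set.exists_of_ssubset hss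
  obtain ⟨ε, hε, hball⟩ := Metric.isOpen_iff.1 hR' p hpR'
  simp only [cell, Set.mem_setOf_eq, not_forall] at hpc
  obtain ⟨i, hi, hcond⟩ := hpc
  have hget : ∃ x, dist x p < ε ∧
      (if s i then lf a b i x < 0 else 0 < lf a b i x) := by
    cases hsi : s i
    · rw [hsi] at hcond
      rw [if_neg (by simp : ¬ (false = true))] at hcond
      push_neg at hcond
      obtain ⟨x, hx1, hx2⟩ := exists_near_pos hi hε hcond
      exact ⟨x, hx1, by simp [hx2]⟩
    · rw [hsi] at hcond
      rw [if_pos rfl] at hcond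
      push_neg at hcond
      obtain ⟨x, hx1, hx2⟩ := exists_near_neg hi hε hcond
      exact ⟨x, hx1, by simp [hx2]⟩
  obtain ⟨x, hx1, hx2⟩ := hget
  have hUopen : IsOpen (Metric.ball p ε ∩
      {y | if s i then lf a b i y < 0 else 0 < lf a b i y}) := by
    refine Metric.isOpen_ball.inter ?_
    cases hsi : s i
    · simp only [hsi, if_neg (by simp : ¬ (false = true))]
      exact isOpen_lt continuous_const (continuous_lf a b i)
    · simp only [hsi, if_pos rfl]
      exact isOpen_lt (continuous_lf a b i) continuous_const
  have hUne : (Metric.ball p ε ∩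
      {y | if s i then lf a b i y < 0 else 0 < lf a b i y}).Nonempty :=
    ⟨x, Metric.mem_ball.2 hx1, hx2⟩
  obtain ⟨q, hqU, hq0⟩ := exists_avoid Finset.univ a b hUopen hUne
  have hq0' : ∀ k, lf a b k q ≠ 0 := fun k => hq0 k (Finset.mem_univ k) (hrows k)
  have hqcell := claimA q (hball hqU.1) hq0'
  have hqi := hqcell i (hrows i)
  have hqi2 := hqU.2
  simp only [Set.mem_setOf_eq] at hqi2
  cases hsi : s i
  · rw [hsi] at hqi hqi2
    rw [if_neg (by simp : ¬ (false = true))] at hqi hqi2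
    linarith
  · rw [hsi] at hqi hqi2
    rw [if_pos rfl] at hqi hqi2
    linarith

/-! ### The explicit arrangement -/

def tv {n : ℕ} (i : Fin n) : ℝ := ((i : ℕ) : ℝ) + 1

def rv {n : ℕ} (k : Fin n) : ℝ := ((k : ℕ) : ℝ) + 1/2

def av (n d : ℕ) : Fin n → Fin d → ℝ := fun i j => tv i ^ ((j : ℕ) + 1)

def bv (n : ℕ) : Fin n → ℝ := fun _ => 1

lemma av_ne {n d : ℕ} (hd : 0 < d) (i : Fin n) : av n d i ≠ 0 := by
  intro h0
  have h1 := congrFun h0 ⟨0, hd⟩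
  have hp : (0:ℝ) < av n d i ⟨0, hd⟩ := by
    unfold av tv; positivity
  rw [h1] at hp
  simp at hp

def pK {n : ℕ} (K : Finset (Fin n)) : Polynomial ℝ :=
  ∏ k ∈ K, (1 - Polynomial.C (rv k)⁻¹ * Polynomial.X)

def xK {n : ℕ} (d : ℕ) (K : Finset (Fin n)) : Fin d → ℝ := fun j => (pK K).coeff ((j : ℕ) + 1)

def sK {n : ℕ} (K : Finset (Fin n)) : Fin n → Bool := fun i =>
  decide (Even (K.filter (fun k => k ≤ i)).card)

lemma pK_natDegree {n : ℕ} (K : Finset (Fin n)) : (pK K).natDegree ≤ K.card := by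
  refine le_trans (Polynomial.natDegree_prod_le K _) ?_
  have h1 : ∀ k ∈ K, (1 - Polynomial.C (rv k)⁻¹ * Polynomial.X : Polynomial ℝ).natDegree ≤ 1 := by
    intro k _
    refine le_trans (Polynomial.natDegree_sub_le _ _) ?_
    rw [Polynomial.natDegree_one]
    simp only [max_le_iff]
    refine ⟨Nat.zero_le _, ?_⟩
    exact le_trans (Polynomial.natDegree_C_mul_le _ _) (le_of_eq Polynomial.natDegree_X)
  calc _ ≤ ∑ _k ∈ K, 1 := Finset.sum_le_sum h1
    _ = K.card := by simp

lemma pK_coeff_zero {n : ℕ} (K : Finset (Fin n)) : (pK K).coeff 0 = 1 := by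
  rw [Polynomial.coeff_zero_eq_eval_zero, pK, Polynomial.eval_prod]
  simp

lemma pK_eval {n : ℕ} (K : Finset (Fin n)) (t : ℝ) :
    (pK K).eval t = ∏ k ∈ K, (1 - (rv k)⁻¹ * t) := by
  rw [pK, Polynomial.eval_prod]
  simp

lemma lf_xK {n d : ℕ} (K : Finset (Fin n)) (hK : K.card ≤ d) (i : Fin n) :
    lf (av n d) (bv n) i (xK d K) = (pK K).eval (tv i) := by
  have hdeg : (pK K).natDegree < d + 1 := Nat.lt_succ_of_le (le_trans (pK_natDegree K) hK)
  rw [Polynomial.eval_eq_sum_range' hdeg, Finset.sum_range_succ', pK_coeff_zero]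
  simp only [pow_zero, mul_one]
  simp only [lf, av, bv, xK]
  rw [Fin.sum_univ_eq_sum_range (fun j => tv i ^ (j + 1) * (pK K).coeff (j + 1)) d]
  congr 1
  exact Finset.sum_congr rfl fun j _ => mul_comm _ _

lemma pK_eval_sign {n : ℕ} (K : Finset (Fin n)) (i : Fin n) :
    if Even (K.filter (fun k => k ≤ i)).card then 0 < (pK K).eval (tv i)
    else (pK K).eval (tv i) < 0 := by
  classical
  rw [pK_eval]
  rw [← Finset.prod_filter_mul_prod_filter_not K (fun k => k ≤ i)]
  have hpos2 : 0 < ∏ k ∈ K.filter (fun k => ¬ k ≤ i), (1 - (rv k)⁻¹ * tv i) := by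
    refine Finset.prod_pos fun k hk => ?_
    have hik : ¬ k ≤ i := (Finset.mem_filter.1 hk).2
    have hlt : (i : ℕ) < (k : ℕ) := not_le.1 hik
    have hk2 : (0:ℝ) < rv k := by unfold rv; positivity
    rw [sub_pos, show (rv k)⁻¹ * tv i = tv i / rv k from by ring, div_lt_one hk2]
    have : ((i:ℕ):ℝ) + 1 ≤ ((k:ℕ):ℝ) := by exact_mod_cast hlt
    unfold tv rv
    linarith
  have hneg1 : ∀ k ∈ K.filter (fun k => k ≤ i), (0:ℝ) < -(1 - (rv k)⁻¹ * tv i) := by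
    intro k hk
    have hik : k ≤ i := (Finset.mem_filter.1 hk).2
    have hle : (k : ℕ) ≤ (i : ℕ) := hik
    have hk2 : (0:ℝ) < rv k := by unfold rv; positivity
    rw [neg_pos, sub_neg, show (rv k)⁻¹ * tv i = tv i / rv k from by ring, lt_div_iff₀ hk2,
      one_mul]
    have : ((k:ℕ):ℝ) ≤ ((i:ℕ):ℝ) := by exact_mod_cast hle
    unfold tv rv
    linarith
  have hsplit : ∏ k ∈ K.filter (fun k => k ≤ i), (1 - (rv k)⁻¹ * tv i)
      = (-1) ^ (K.filter (fun k => k ≤ i)).card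
        * ∏ k ∈ K.filter (fun k => k ≤ i), (-(1 - (rv k)⁻¹ * tv i)) := by
    rw [← Finset.prod_const (-1 : ℝ), ← Finset.prod_mul_distrib]
    exact Finset.prod_congr rfl fun k _ => by ring
  have hpos1 : 0 < ∏ k ∈ K.filter (fun k => k ≤ i), (-(1 - (rv k)⁻¹ * tv i)) :=
    Finset.prod_pos hneg1
  by_cases heven : Even (K.filter (fun k => k ≤ i)).card
  · rw [if_pos heven, hsplit, heven.neg_one_pow, one_mul]
    positivity
  · rw [if_neg heven, hsplit, (Nat.not_even_iff_odd.1 heven).neg_one_pow]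
    nlinarith

lemma xK_mem {n d : ℕ} {K : Finset (Fin n)} (hK : K.card ≤ d) :
    xK d K ∈ cell (av n d) (bv n) (sK K) := by
  intro i _
  have hsign := pK_eval_sign K i
  rw [← lf_xK K hK i] at hsign
  by_cases heven : Even (K.filter (fun k => k ≤ i)).card
  · rw [if_pos heven] at hsign
    rw [if_pos (by simp [sK, heven] : sK K i = true)]
    exact hsign
  · rw [if_neg heven] at hsign
    rw [if_neg (by simp [sK, heven] : ¬ sK K i = true)]
    exact hsign

lemma sK_inj {n : ℕ} (K K' : Finset (Fin n)) (h : sK K = sK K') : K = K' := by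
  classical
  have hsplit : ∀ (M : Finset (Fin n)) (k : Fin n), (M.filter (fun k' => k' ≤ k)).card
      = (M.filter (fun k' => k' < k)).card + (if k ∈ M then 1 else 0) := by
    intro M k
    have hun : M.filter (fun k' => k' ≤ k)
        = (M.filter (fun k' => k' < k)) ∪ (M.filter (fun k' => k' = k)) := by
      ext k'
      simp only [Finset.mem_filter, Finset.mem_union]
      constructor
      · rintro ⟨hm, hle⟩
        rcases lt_or_eq_of_le hle with hlt | heq
        · exact Or.inl ⟨hm, hlt⟩
        · exact Or.inr ⟨hm, heq⟩
      · rintro (⟨hm, hlt⟩ | ⟨hm, heq⟩)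
        · exact ⟨hm, hlt.le⟩
        · exact ⟨hm, heq.le⟩
    have hdis : Disjoint (M.filter (fun k' => k' < k)) (M.filter (fun k' => k' = k)) := by
      rw [Finset.disjoint_left]
      rintro y hy1 hy2
      have h1 : y < k := (Finset.mem_filter.1 hy1).2
      have h2 : y = k := (Finset.mem_filter.1 hy2).2
      rw [h2] at h1
      exact lt_irrefl _ h1
    rw [hun, Finset.card_union_of_disjoint hdis]
    congr 1
    rw [Finset.filter_eq']
    split <;> simp
  have step : ∀ k : Fin n, (∀ k' : Fin n, k' < k → (k' ∈ K ↔ k' ∈ K')) →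
      (k ∈ K ↔ k ∈ K') := by
    intro k IH
    have hfilter : K.filter (fun k' => k' < k) = K'.filter (fun k' => k' < k) := by
      ext k'
      simp only [Finset.mem_filter]
      constructor
      · rintro ⟨hm, hlt⟩
        exact ⟨(IH k' hlt).1 hm, hlt⟩
      · rintro ⟨hm, hlt⟩
        exact ⟨(IH k' hlt).2 hm, hlt⟩
    have h2 : Even (K.filter (fun k' => k' ≤ k)).card
        ↔ Even (K'.filter (fun k' => k' ≤ k)).card := by
      have h1 := congrFun h k
      simp only [sK] at h1
      exact decide_eq_decide.1 h1
    rw [hsplit K k, hsplit K' k, hfilter] at h2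
    by_cases hk : k ∈ K <;> by_cases hk' : k ∈ K'
    · exact iff_of_true hk hk'
    · exfalso
      rw [if_pos hk, if_neg hk', add_zero, Nat.even_add_one] at h2
      tauto
    · exfalso
      rw [if_neg hk, if_pos hk', add_zero, Nat.even_add_one] at h2
      tauto
    · exact iff_of_false hk hk'
  have main : ∀ m : ℕ, ∀ k : Fin n, (k : ℕ) ≤ m → (k ∈ K ↔ k ∈ K') := by
    intro m
    induction m with
    | zero =>
      intro k hk
      refine step k fun k' hlt => ?_
      exfalso
      have h1 : (k' : ℕ) < (k : ℕ) := hlt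
      omega
    | succ m ih =>
      intro k hk
      refine step k fun k' hlt => ih k' ?_
      have h1 : (k' : ℕ) < (k : ℕ) := hlt
      omega
  ext k
  exact main (k : ℕ) k le_rfl

lemma card_Ks (n d : ℕ) :
    {K : Finset (Fin n) | K.card ≤ d}.ncard = ∑ i ∈ Finset.range (d+1), n.choose i := by
  classical
  rw [Set.ncard_eq_toFinset_card']
  have htf : {K : Finset (Fin n) | K.card ≤ d}.toFinset
      = Finset.univ.filter (fun K => K.card ≤ d) := by
    ext K
    simp
  rw [htf]
  have hdec : Finset.univ.filter (fun K : Finset (Fin n) => K.card ≤ d)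
      = (Finset.range (d+1)).biUnion
          (fun i => Finset.univ.filter (fun K : Finset (Fin n) => K.card = i)) := by
    ext K
    simp only [Finset.mem_filter, Finset.mem_univ, true_and, Finset.mem_biUnion,
      Finset.mem_range, Nat.lt_succ_iff]
    constructor
    · intro hle
      exact ⟨K.card, hle, rfl⟩
    · rintro ⟨i, hi, rfl⟩
      exact hi
  rw [hdec, Finset.card_biUnion]
  · refine Finset.sum_congr rfl fun i _ => ?_
    have hpc : Finset.univ.filter (fun K : Finset (Fin n) => K.card = i)
        = Finset.powersetCard i Finset.univ := by
      ext K
      simp [Finset.mem_powersetCard]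
    rw [hpc, Finset.card_powersetCard, Finset.card_univ, Fintype.card_fin]
  · intro i _ j _ hij
    rw [Function.onFun, Finset.disjoint_left]
    rintro K hK1 hK2
    apply hij
    rw [← (Finset.mem_filter.1 hK1).2, ← (Finset.mem_filter.1 hK2).2]

lemma exists_generic_c (n d : ℕ) (hd : 0 < d) :
    ∃ c : Fin n → ℝ, ∀ s s' : Fin n → Bool, s ≠ s' →
      (∑ i, ((if s i then (1:ℝ) else 0) - (if s' i then 1 else 0)) * av n d i ⟨0, hd⟩ * c i)
        ≠ 0 := by
  classical
  obtain ⟨c, -, hc⟩ := exists_avoid (ι := (Fin n → Bool) × (Fin n → Bool))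
      (Finset.univ.filter fun p => p.1 ≠ p.2)
      (fun p i => ((if p.1 i then (1:ℝ) else 0) - (if p.2 i then 1 else 0)) * av n d i ⟨0, hd⟩)
      (fun _ => 0) isOpen_univ ⟨fun _ => 0, Set.mem_univ _⟩
  refine ⟨c, fun s s' hss => ?_⟩
  have hv : (fun i => ((if s i then (1:ℝ) else 0) - (if s' i then 1 else 0)) * av n d i ⟨0, hd⟩)
      ≠ 0 := by
    obtain ⟨i, hi⟩ := Function.ne_iff.1 hss
    refine Function.ne_iff.2 ⟨i, ?_⟩
    have hav : (0:ℝ) < av n d i ⟨0, hd⟩ := by unfold av tv; positivity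
    simp only [Pi.zero_apply]
    cases hb : s i <;> cases hb' : s' i <;> rw [hb, hb'] at hi
    · exact absurd rfl hi
    · rw [if_neg (by simp : ¬((false : Bool) = true)), if_pos rfl]
      exact ne_of_lt (by nlinarith)
    · rw [if_pos rfl, if_neg (by simp : ¬((false : Bool) = true))]
      exact ne_of_gt (by nlinarith)
    · exact absurd rfl hi
  have hmem : (s, s') ∈ Finset.univ.filter
      (fun p : (Fin n → Bool) × (Fin n → Bool) => p.1 ≠ p.2) := by
    simp [hss]
  have hres := hc (s, s') hmem hv
  simpa using hres

lemma piece_ne {n d : ℕ} (hd : 0 < d) (c : Fin n → ℝ) (e : ℝ)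
    (hc : ∀ s s' : Fin n → Bool, s ≠ s' →
      (∑ i, ((if s i then (1:ℝ) else 0) - (if s' i then 1 else 0)) * av n d i ⟨0, hd⟩ * c i)
        ≠ 0) :
    ∀ s s' : Fin n → Bool, s ≠ s' →
      piece (av n d) (bv n) c e s ≠ piece (av n d) (bv n) c e s' := by
  classical
  intro s s' hss heq
  apply hc s s' hss
  set j0 : Fin d := ⟨0, hd⟩ with hj0
  set x1 : Fin d → ℝ := Function.update (0 : Fin d → ℝ) j0 ((0 : Fin d → ℝ) j0 + 1) with hx1
  have h1 := congrFun (congrFun heq x1) 0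
  have h0 := congrFun (congrFun heq (0 : Fin d → ℝ)) 0
  simp only [piece] at h1 h0
  have hkey : ∀ σ : Fin n → Bool,
      (∑ i, if av n d i ≠ 0 ∧ σ i = true then c i * lf (av n d) (bv n) i x1
            else if av n d i = 0 then c i * max (bv n i) 0 else 0)
      - (∑ i, if av n d i ≠ 0 ∧ σ i = true then c i * lf (av n d) (bv n) i (0 : Fin d → ℝ)
            else if av n d i = 0 then c i * max (bv n i) 0 else 0)
      = ∑ i, (if σ i then c i * av n d i j0 else 0) := by
    intro σ
    rw [← Finset.sum_sub_distrib]
    refine Finset.sum_congr rfl fun i _ => ?_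
    have hrow := av_ne hd i
    have hlf : lf (av n d) (bv n) i x1
        = lf (av n d) (bv n) i (0 : Fin d → ℝ) + av n d i j0 * 1 := by
      rw [hx1]
      exact lf_update (av n d) (bv n) i (0 : Fin d → ℝ) j0 1
    by_cases hσ : σ i = true
    · rw [if_pos ⟨hrow, hσ⟩, if_pos ⟨hrow, hσ⟩, if_pos hσ, hlf]
      ring
    · have hcond : ¬(av n d i ≠ 0 ∧ σ i = true) := fun hand => hσ hand.2
      simp only [if_neg hcond, if_neg hrow, if_neg hσ]
      ring
  have hdiff : (∑ i, (if s i then c i * av n d i j0 else 0))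
      = ∑ i, (if s' i then c i * av n d i j0 else 0) := by
    rw [← hkey s, ← hkey s']
    linarith [h1, h0]
  rw [← sub_eq_zero, ← Finset.sum_sub_distrib] at hdiff
  have hterm : ∀ i, ((if s i then (1:ℝ) else 0) - (if s' i then 1 else 0)) * av n d i j0 * c i
      = (if s i then c i * av n d i j0 else 0) - (if s' i then c i * av n d i j0 else 0) := by
    intro i
    rcases Bool.eq_false_or_eq_true (s i) with h | h <;>
      rcases Bool.eq_false_or_eq_true (s' i) with h' | h' <;>
      rw [h, h'] <;> simp <;> try ring
  rw [Finset.sum_congr rfl fun i _ => hterm i]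
  exact hdiff

/-- The optimal network. -/
theorem exists_best (n d : ℕ) (hd : 0 < d) :
    ∃ f : (Fin d → ℝ) → Fin 1 → ℝ, Computes d [n] 1 f ∧
      numRegions f = ∑ i ∈ Finset.range (d+1), n.choose i := by
  classical
  obtain ⟨c, hc⟩ := exists_generic_c n d hd
  have hrows : ∀ i, av n d i ≠ 0 := fun i => av_ne hd i
  set f₀ : (Fin d → ℝ) → Fin n → ℝ := fun x i => lf (av n d) (bv n) i x with hf₀
  set g : (Fin n → ℝ) → Fin 1 → ℝ := fun y _ => (∑ i, c i * y i) + 0 with hgdef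
  refine ⟨fun x => g (fun i => relu (f₀ x i)), ?_, ?_⟩
  · exact ComputesA.cons f₀ g ⟨av n d, bv n, fun x i => rfl⟩
      (ComputesA.nil g ⟨fun _ i => c i, fun _ => 0, fun y k => rfl⟩)
  · have hf : (fun x => g (fun i => relu (f₀ x i)))
        = fun x (_ : Fin 1) => (∑ i, c i * relu (lf (av n d) (bv n) i x)) + (0:ℝ) := by
      funext x k
      rw [hgdef, hf₀]
    have hupper := numRegions_le (av n d) (bv n) c 0 hf
    have hdist := piece_ne hd c 0 hc
    have hreg : ∀ K : Finset (Fin n), K.card ≤ d →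
        IsLinearRegion (fun x => g (fun i => relu (f₀ x i)))
          (cell (av n d) (bv n) (sK K)) := fun K hK =>
      cell_isRegion hrows hdist hf ⟨xK d K, xK_mem hK⟩
    have hfin := regions_finite (av n d) (bv n) c 0 hf
    have himg : (fun K : Finset (Fin n) => cell (av n d) (bv n) (sK K)) '' {K | K.card ≤ d}
        ⊆ {R | IsLinearRegion (fun x => g (fun i => relu (f₀ x i))) R} := by
      rintro _ ⟨K, hK, rfl⟩
      exact hreg K hK
    have hinj : Set.InjOn (fun K : Finset (Fin n) => cell (av n d) (bv n) (sK K))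
        {K | K.card ≤ d} := by
      intro K1 h1 K2 h2 heq
      by_contra hne
      have hsne : sK K1 ≠ sK K2 := fun h => hne (sK_inj _ _ h)
      exact cell_ne hrows hsne ⟨xK d K1, xK_mem h1⟩ heq
    have hlower : ∑ i ∈ Finset.range (d+1), n.choose i
        ≤ numRegions (fun x => g (fun i => relu (f₀ x i))) := by
      calc ∑ i ∈ Finset.range (d+1), n.choose i
          = {K : Finset (Fin n) | K.card ≤ d}.ncard := (card_Ks n d).symm
        _ = ((fun K : Finset (Fin n) => cell (av n d) (bv n) (sK K)) ''
            {K | K.card ≤ d}).ncard := (Set.ncard_image_of_injOn hinj).symm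
        _ ≤ numRegions (fun x => g (fun i => relu (f₀ x i))) :=
            Set.ncard_le_ncard himg hfin
    exact le_antisymm hupper hlower

end Stmt6

/-- `R(n₀, n₁, 1) = ∑_{i=0}^{min{n₀,n₁}} C(n₁, i)`. -/
theorem stmt_6 (n₀ n₁ : ℕ) (h₀ : 0 < n₀) (h₁ : 0 < n₁) :
    maxRegions n₀ [n₁] 1 = ∑ i ∈ Finset.range (min n₀ n₁ + 1), n₁.choose i := by
  have hsum : ∑ i ∈ Finset.range (min n₀ n₁ + 1), n₁.choose i
      = ∑ i ∈ Finset.range (n₀ + 1), n₁.choose i := by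
    rcases le_total n₀ n₁ with h | h
    · rw [min_eq_left h]
    · rw [min_eq_right h]
      refine Finset.sum_subset (Finset.range_subset_range.2 (by omega)) ?_
      intro i hi hni
      simp only [Finset.mem_range] at hi hni
      exact Nat.choose_eq_zero_of_lt (by omega)
  rw [hsum]
  obtain ⟨fstar, hfc, hfn⟩ := Stmt6.exists_best n₁ n₀ h₀
  have hub : ∀ k ∈ {k | ∃ f : (Fin n₀ → ℝ) → Fin 1 → ℝ,
      Computes n₀ [n₁] 1 f ∧ numRegions f = k},
      k ≤ ∑ i ∈ Finset.range (n₀+1), n₁.choose i := by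
    rintro k ⟨f, hcomp, rfl⟩
    cases hcomp with
    | cons f₀ g hf₀ hg =>
      cases hg with
      | nil _ hgaff =>
        obtain ⟨A, bb, hA⟩ := hf₀
        obtain ⟨Cm, ee, hC⟩ := hgaff
        refine Stmt6.numRegions_le A bb (fun i => Cm 0 i) (ee 0) ?_
        funext x k
        have hk : k = 0 := Fin.eq_zero k
        subst hk
        rw [hC (fun i => relu (f₀ x i)) 0]
        congr 1
        refine Finset.sum_congr rfl fun i _ => ?_
        rw [hA x i]
        rfl
  have hmem : (∑ i ∈ Finset.range (n₀+1), n₁.choose i)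
      ∈ {k | ∃ f : (Fin n₀ → ℝ) → Fin 1 → ℝ, Computes n₀ [n₁] 1 f ∧ numRegions f = k} :=
    ⟨fstar, hfc, hfn⟩
  unfold maxRegions
  exact le_antisymm (csSup_le ⟨_, hmem⟩ hub) (le_csSup ⟨_, hub⟩ hmem)
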